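/- Let a(τ) = ((√2 + 1)τ + 2)/(4τ(τ + 1)) and b(τ) = ((√2 − 1)τ − 2)/(4τ(τ + 1)), fix τ₀ > 2(√2 + 1), and let ψ : [τ₀, ∞) → ℝ be a differentiable solution of the Riccati equation dψ/dτ = b(τ) − a(τ)·ψ² with 1 − √2 ≤ ψ(τ) ≤ 0 for all τ ≥ τ₀. Then ψ(τ) tends to 1 − √2 as τ → ∞. -/

import Mathlib

open Filter

open Set Topology in
set_option maxHeartbeats 1000000 in
private lemma riccati_aux
    (τ₀ : ℝ) (hτ₀ : 2 * (Real.sqrt 2 + 1) < τ₀) (ψ : ℝ → ℝ)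
    (hψ : ∀ τ : ℝ, τ₀ ≤ τ →
      HasDerivWithinAt ψ
        (((Real.sqrt 2 - 1) * τ - 2) / (4 * τ * (τ + 1))
          - ((Real.sqrt 2 + 1) * τ + 2) / (4 * τ * (τ + 1)) * ψ τ ^ 2) (Set.Ici τ₀) τ)
    (hbounds : ∀ τ : ℝ, τ₀ ≤ τ → 1 - Real.sqrt 2 ≤ ψ τ ∧ ψ τ ≤ 0) :
    ∀ τ : ℝ, τ₀ ≤ τ →
      (Real.sqrt 2 - 1) * τ - 2 ≤ ((Real.sqrt 2 + 1) * τ + 2) * ψ τ ^ 2 := by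
  have hs0 : (0:ℝ) ≤ Real.sqrt 2 := Real.sqrt_nonneg 2
  have hs2 : Real.sqrt 2 ^ 2 = 2 := Real.sq_sqrt (by norm_num)
  have h1s : 1 < Real.sqrt 2 := by nlinarith
  have hs2' : Real.sqrt 2 < 2 := by nlinarith
  have hτ04 : (4:ℝ) < τ₀ := by nlinarith
  by_contra hcon
  push_neg at hcon
  obtain ⟨τ₁, hτ₁, hlt⟩ := hcon
  have hτ₁4 : (4:ℝ) < τ₁ := lt_of_lt_of_le hτ04 hτ₁
  set A₁ : ℝ := (Real.sqrt 2 + 1) * τ₁ + 2 with hA₁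
  have hA₁pos : 0 < A₁ := by rw [hA₁]; nlinarith
  set δ : ℝ := ((Real.sqrt 2 - 1) * τ₁ - 2) - A₁ * ψ τ₁ ^ 2 with hδ
  have hδpos : 0 < δ := by rw [hδ]; linarith
  set c : ℝ := δ / (8 * A₁) with hc
  have hcpos : 0 < c := by rw [hc]; positivity
  set G : ℝ → ℝ := fun t => ψ t - c * Real.log t with hG
  clear_value A₁ δ c G
  -- derivative of G is positive wherever ψ t ≥ ψ τ₁
  have hGd : ∀ t : ℝ, τ₁ ≤ t → ψ τ₁ ≤ ψ t →
      HasDerivWithinAt G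
        ((((Real.sqrt 2 - 1) * t - 2) / (4 * t * (t + 1))
          - ((Real.sqrt 2 + 1) * t + 2) / (4 * t * (t + 1)) * ψ t ^ 2) - c * t⁻¹)
        (Ici t) t ∧
      0 < (((Real.sqrt 2 - 1) * t - 2) / (4 * t * (t + 1))
          - ((Real.sqrt 2 + 1) * t + 2) / (4 * t * (t + 1)) * ψ t ^ 2) - c * t⁻¹ := by
    intro t ht hψt
    have ht4 : (4:ℝ) < t := lt_of_lt_of_le hτ₁4 ht
    have ht0 : (0:ℝ) < t := by linarith
    have htτ₀ : τ₀ ≤ t := le_trans hτ₁ ht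
    have hb := hbounds t htτ₀
    constructor
    · rw [hG]
      exact ((hψ t htτ₀).sub
        (((Real.hasDerivAt_log (ne_of_gt ht0)).hasDerivWithinAt).const_mul c)).mono
        (Ici_subset_Ici.mpr htτ₀)
    · -- positivity
      have hD : (0:ℝ) < 4 * t * (t + 1) := by nlinarith
      have hp2 : ψ t ^ 2 ≤ ψ τ₁ ^ 2 := by nlinarith [hb.2, (hbounds τ₁ hτ₁).1]
      have hApos : (0:ℝ) < (Real.sqrt 2 + 1) * t + 2 := by nlinarith
      have hmono : ((Real.sqrt 2 + 1) * t + 2) * ((Real.sqrt 2 - 1) * τ₁ - 2)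
          ≤ (((Real.sqrt 2 - 1) * t - 2)) * A₁ := by rw [hA₁]; nlinarith
      have hformula : ((Real.sqrt 2 - 1) * t - 2) / (4 * t * (t + 1))
          - ((Real.sqrt 2 + 1) * t + 2) / (4 * t * (t + 1)) * ψ t ^ 2
          = (((Real.sqrt 2 - 1) * t - 2) - ((Real.sqrt 2 + 1) * t + 2) * ψ t ^ 2)
            / (4 * t * (t + 1)) := by
        field_simp
      rw [hformula, sub_pos, ← div_eq_mul_inv, div_lt_div_iff₀ ht0 hD]
      have h2 : ((((Real.sqrt 2 - 1) * t - 2) - ((Real.sqrt 2 + 1) * t + 2) * ψ τ₁ ^ 2)) * A₁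
          - ((Real.sqrt 2 + 1) * t + 2) * δ
          = (((Real.sqrt 2 - 1) * t - 2)) * A₁
            - ((Real.sqrt 2 + 1) * t + 2) * ((Real.sqrt 2 - 1) * τ₁ - 2) := by
        rw [hδ]; ring
      have h3 : ((Real.sqrt 2 + 1) * t + 2) * δ
          ≤ ((((Real.sqrt 2 - 1) * t - 2) - ((Real.sqrt 2 + 1) * t + 2) * ψ t ^ 2)) * A₁ := by
        nlinarith [mul_le_mul_of_nonneg_left hp2 hApos.le]
      have h8A : (0:ℝ) < 8 * A₁ := by positivity
      have hc8 : c * (8 * A₁) = δ := by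
        rw [hc]; field_simp
      rw [← mul_lt_mul_iff_of_pos_right h8A]
      have hL : c * (4 * t * (t + 1)) * (8 * A₁)
          = δ * (4 * t * (t + 1)) := by
        linear_combination (4 * t * (t + 1)) * hc8
      rw [hL]
      nlinarith [mul_le_mul_of_nonneg_left h3 (show (0:ℝ) ≤ 8 * t by linarith),
        mul_lt_mul_of_pos_left (show t + 1 < 2 * ((Real.sqrt 2 + 1) * t + 2) by nlinarith)
          (mul_pos (show (0:ℝ) < 4 * t by linarith) hδpos)]
  -- continuity of G on [τ₁, ∞)
  have hψc : ContinuousOn ψ (Ici τ₀) := fun τ hτ => (hψ τ hτ).continuousWithinAt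
  have hGc : ContinuousOn G (Ici τ₁) := by
    rw [hG]
    apply ContinuousOn.sub
    · exact hψc.mono (Ici_subset_Ici.mpr hτ₁)
    · exact continuousOn_const.mul (Real.continuousOn_log.mono
        (fun x hx => by simp; intro h; rw [h] at hx; simp at hx; linarith))
  -- persistence: G t ≥ G τ₁ for all t ≥ τ₁
  have claim : ∀ τ₂ : ℝ, τ₁ ≤ τ₂ → G τ₁ ≤ G τ₂ := by
    intro τ₂ hτ₂
    by_contra hGc2
    push_neg at hGc2
    set K : Set ℝ := Icc τ₁ τ₂ ∩ G ⁻¹' (Ici (G τ₁)) with hK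
    have hKclosed : IsClosed K :=
      (hGc.mono (Icc_subset_Ici_self)).preimage_isClosed_of_isClosed isClosed_Icc isClosed_Ici
    have hKne : K.Nonempty := ⟨τ₁, ⟨le_refl _, hτ₂⟩, show G τ₁ ≤ G τ₁ from le_rfl⟩
    have hKbdd : BddAbove K := BddAbove.mono (fun x hx => hx.1) bddAbove_Icc
    set x := sSup K with hx
    have hxK : x ∈ K := hKclosed.csSup_mem hKne hKbdd
    obtain ⟨⟨hx1, hx2⟩, hx3⟩ := hxK
    have hxne : x ≠ τ₂ := by
      intro h; rw [h] at hx3; exact absurd hx3 (not_le.mpr hGc2)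
    have hxlt : x < τ₂ := lt_of_le_of_ne hx2 hxne
    -- ψ x ≥ ψ τ₁
    have hlogx : Real.log τ₁ ≤ Real.log x :=
      Real.log_le_log (by linarith) hx1
    have hψx : ψ τ₁ ≤ ψ x := by
      have h5 : ψ τ₁ - c * Real.log τ₁ ≤ ψ x - c * Real.log x := by
        have h6 : G τ₁ ≤ G x := hx3
        rw [hG] at h6; exact h6
      linarith [mul_le_mul_of_nonneg_left hlogx hcpos.le]
    obtain ⟨hd, hdpos⟩ := hGd x hx1 hψx
    rw [hasDerivWithinAt_iff_tendsto_slope, Ici_sdiff_left] at hd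
    have h3 : ∀ᶠ t in 𝓝[>] x, 0 < slope G x t := hd.eventually (eventually_gt_nhds hdpos)
    have h4 : Ioc x τ₂ ∈ 𝓝[>] x := Ioc_mem_nhdsGT hxlt
    obtain ⟨t, hts, htm⟩ := (h3.and (eventually_of_mem h4 (fun _ h => h))).exists
    have htx : x < t := htm.1
    have hGt : G x < G t := by
      rw [slope_def_field] at hts
      have := mul_pos hts (show (0:ℝ) < t - x by linarith)
      rw [div_mul_cancel₀] at this
      · linarith
      · exact ne_of_gt (by linarith)
    have htK : t ∈ K := ⟨⟨le_trans hx1 htx.le, htm.2⟩, le_trans hx3 hGt.le⟩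
    exact absurd (le_csSup hKbdd htK) (not_le.mpr htx)
  -- blow-up contradiction
  have hτ₁0 : (0:ℝ) < τ₁ := by linarith
  set T : ℝ := τ₁ * Real.exp ((1 - ψ τ₁) / c) with hT
  have harg : 0 ≤ (1 - ψ τ₁) / c :=
    div_nonneg (by linarith [(hbounds τ₁ hτ₁).2]) hcpos.le
  have hTτ₁ : τ₁ ≤ T := by
    rw [hT]
    nlinarith [Real.one_le_exp harg]
  have hGT := claim T hTτ₁
  have hlogT : Real.log T = Real.log τ₁ + (1 - ψ τ₁) / c := by
    rw [hT, Real.log_mul (ne_of_gt hτ₁0) (Real.exp_ne_zero _), Real.log_exp]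
  have hcc : c * ((1 - ψ τ₁) / c) = 1 - ψ τ₁ := mul_div_cancel₀ _ (ne_of_gt hcpos)
  have hψT : 1 ≤ ψ T := by
    have h7 : ψ τ₁ - c * Real.log τ₁ ≤ ψ T - c * Real.log T := by
      rw [hG] at hGT; exact hGT
    rw [hlogT] at h7
    nlinarith
  have := (hbounds T (le_trans hτ₁ hTτ₁)).2
  linarith

noncomputable def aR (τ : ℝ) : ℝ := ((Real.sqrt 2 + 1) * τ + 2) / (4 * τ * (τ + 1))
noncomputable def bR (τ : ℝ) : ℝ := ((Real.sqrt 2 - 1) * τ - 2) / (4 * τ * (τ + 1))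

/-- A solution of the Riccati equation `ψ' = b(τ) − a(τ)ψ²` staying in the
strip `1 − √2 ≤ ψ ≤ 0` on `[τ₀, ∞)` (with `τ₀ > 2(√2+1)`) tends to
`1 − √2` at infinity. -/
theorem riccati_solution_in_D₂_tends_to_limit
    (τ₀ : ℝ) (hτ₀ : 2 * (Real.sqrt 2 + 1) < τ₀) (ψ : ℝ → ℝ)
    (hψ : ∀ τ : ℝ, τ₀ ≤ τ →
      HasDerivWithinAt ψ (bR τ - aR τ * ψ τ ^ 2) (Set.Ici τ₀) τ)
    (hbounds : ∀ τ : ℝ, τ₀ ≤ τ → 1 - Real.sqrt 2 ≤ ψ τ ∧ ψ τ ≤ 0) :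
    Tendsto ψ atTop (nhds (1 - Real.sqrt 2)) := by
  have hs0 : (0:ℝ) ≤ Real.sqrt 2 := Real.sqrt_nonneg 2
  have hs2 : Real.sqrt 2 ^ 2 = 2 := Real.sq_sqrt (by norm_num)
  have h1s : 1 < Real.sqrt 2 := by nlinarith
  have hs2' : Real.sqrt 2 < 2 := by nlinarith
  have hτ04 : (4:ℝ) < τ₀ := by nlinarith
  have key := riccati_aux τ₀ hτ₀ ψ (by simpa [aR, bR] using hψ) hbounds
  -- pointwise upper bound
  have hupper : ∀ τ : ℝ, τ₀ ≤ τ → ψ τ ≤ (1 - Real.sqrt 2)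
      + (8 - 4 * Real.sqrt 2) / ((Real.sqrt 2 - 1) * ((Real.sqrt 2 + 1) * τ + 2)) := by
    intro τ hτ
    have hτ4 : (4:ℝ) < τ := lt_of_lt_of_le hτ04 hτ
    have hk := key τ hτ
    have hb := hbounds τ hτ
    have hApos : (0:ℝ) < (Real.sqrt 2 + 1) * τ + 2 := by nlinarith
    have hden : (0:ℝ) < (Real.sqrt 2 - 1) * ((Real.sqrt 2 + 1) * τ + 2) := by nlinarith
    have hw : (0:ℝ) ≤ ψ τ - (1 - Real.sqrt 2) := by linarith [hb.1]
    have : ψ τ - (1 - Real.sqrt 2)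
        ≤ (8 - 4 * Real.sqrt 2) / ((Real.sqrt 2 - 1) * ((Real.sqrt 2 + 1) * τ + 2)) := by
      rw [le_div_iff₀ hden]
      nlinarith [mul_nonneg (mul_nonneg hApos.le hw) (by linarith [hb.2] : (0:ℝ) ≤ -ψ τ)]
    linarith
  -- limit of the upper bound
  have hlim : Tendsto (fun τ : ℝ => (1 - Real.sqrt 2)
      + (8 - 4 * Real.sqrt 2) / ((Real.sqrt 2 - 1) * ((Real.sqrt 2 + 1) * τ + 2)))
      atTop (nhds (1 - Real.sqrt 2)) := by
    have h1 : Tendsto (fun τ : ℝ => (Real.sqrt 2 - 1) * ((Real.sqrt 2 + 1) * τ + 2))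
        atTop atTop := by
      apply Tendsto.const_mul_atTop (by nlinarith : (0:ℝ) < Real.sqrt 2 - 1)
      exact tendsto_atTop_add_const_right _ _
        (Tendsto.const_mul_atTop (by nlinarith) tendsto_id)
    have h2 : Tendsto (fun τ : ℝ => (8 - 4 * Real.sqrt 2)
        / ((Real.sqrt 2 - 1) * ((Real.sqrt 2 + 1) * τ + 2))) atTop (nhds 0) :=
      tendsto_const_nhds.div_atTop h1
    simpa using tendsto_const_nhds.add h2
  refine tendsto_of_tendsto_of_tendsto_of_le_of_le' tendsto_const_nhds hlim ?_ ?_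
  · exact (eventually_ge_atTop τ₀).mono fun τ hτ => (hbounds τ hτ).1
  · exact (eventually_ge_atTop τ₀).mono fun τ hτ => hupper τ hτ
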